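/- For t = (t_k)_{k∈ℤ} with (t_k − k) ∈ ℓ², the linear operator U_t on L²([-π,π]; dx/2π) determined by U_t(e^{ikx}) = e^{it_k x} satisfies: U_t − I is Hilbert–Schmidt, and for any two such sequences s, t one has ‖U_t − U_s‖_{HS} ≤ (2π/√3) ‖t − s‖_{ℓ²}. -/

import Mathlib

open MeasureTheory Real
open scoped NNReal
open scoped ENNReal

/-- The normalized measure `dx/(2π)` on `[-π, π]`. -/
noncomputable def μπ : Measure ℝ :=
  ((1 / (2 * Real.pi)).toNNReal : ℝ≥0) • (volume.restrict (Set.Icc (-Real.pi) Real.pi))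

instance : IsFiniteMeasure μπ := by
  unfold μπ; infer_instance

lemma memLp_fexp (a : ℝ) :
    MemLp (fun x : ℝ => Complex.exp (Complex.I * ((a : ℂ) * (x : ℂ)))) 2 μπ := by
  refine MemLp.of_bound ?_ 1 ?_
  · exact (Complex.continuous_exp.comp (by continuity)).aestronglyMeasurable
  · filter_upwards with x
    have h : (Complex.I * ((a : ℂ) * (x : ℂ))).re = 0 := by simp
    rw [Complex.norm_exp, h, Real.exp_zero]

/-- The element `e^{iax}` of `L²([-π,π]; dx/(2π))`; for `a = k ∈ ℤ` these form the
standard exponential orthonormal basis. -/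
noncomputable def fexp (a : ℝ) : Lp ℂ 2 μπ := (memLp_fexp a).toLp _

/-! ### Auxiliary lemmas -/

lemma abs_exp_I_sub_one_le (θ : ℝ) :
    ‖Complex.exp ((θ : ℂ) * Complex.I) - 1‖ ≤ |θ| := by
  have h : ‖Complex.exp ((θ : ℂ) * Complex.I) - 1‖ ^ 2 ≤ |θ| ^ 2 := by
    rw [← Complex.normSq_eq_norm_sq]
    have : Complex.exp ((θ : ℂ) * Complex.I) - 1 =
        Complex.mk (Real.cos θ - 1) (Real.sin θ) := by
      rw [Complex.exp_mul_I]
      simp [Complex.ext_iff, Complex.cos_ofReal_re, Complex.sin_ofReal_re]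
    rw [this, Complex.normSq_mk]
    have hc := Real.one_sub_sq_div_two_le_cos (x := θ)
    have hcos1 : Real.cos θ ≤ 1 := Real.cos_le_one θ
    have h2 : (Real.cos θ - 1) * (Real.cos θ - 1) + Real.sin θ * Real.sin θ
        = 2 - 2 * Real.cos θ := by nlinarith [Real.sin_sq_add_cos_sq θ]
    rw [h2, sq_abs]
    nlinarith
  exact (pow_le_pow_iff_left₀ (norm_nonneg _) (abs_nonneg θ) two_ne_zero).mp h

lemma μπ_univ : μπ Set.univ = 1 := by
  have hπ : (0:ℝ) < Real.pi := Real.pi_pos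
  rw [μπ, Measure.smul_apply, Measure.restrict_apply_univ, Real.volume_Icc]
  have : (((1 / (2 * Real.pi)).toNNReal : ℝ≥0) : ℝ≥0∞) = ENNReal.ofReal (1 / (2 * Real.pi)) := rfl
  rw [ENNReal.smul_def, smul_eq_mul, this, ← ENNReal.ofReal_mul (by positivity)]
  rw [show Real.pi - -Real.pi = 2 * Real.pi by ring]
  rw [show 1 / (2 * Real.pi) * (2 * Real.pi) = 1 by field_simp]
  exact ENNReal.ofReal_one

instance : IsProbabilityMeasure μπ := ⟨μπ_univ⟩

lemma norm_fexp_sub_le (a b : ℝ) : ‖fexp a - fexp b‖ ≤ Real.pi * |a - b| := by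
  have hπ : (0:ℝ) < Real.pi := Real.pi_pos
  rw [fexp, fexp, ← MemLp.toLp_sub, Lp.norm_toLp]
  have hbound : ∀ᵐ (x : ℝ) ∂μπ, ‖Complex.exp (Complex.I * ((a : ℂ) * x)) -
      Complex.exp (Complex.I * ((b : ℂ) * x))‖ ≤ Real.pi * |a - b| := by
    rw [μπ]
    refine Measure.ae_smul_measure ?_ _
    rw [ae_restrict_iff' measurableSet_Icc]
    filter_upwards with x hx
    have key : Complex.exp (Complex.I * ((a : ℂ) * x)) - Complex.exp (Complex.I * ((b : ℂ) * x))
        = Complex.exp (Complex.I * ((b : ℂ) * x)) *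
          (Complex.exp ((((a - b) * x : ℝ) : ℂ) * Complex.I) - 1) := by
      rw [mul_sub, mul_one, ← Complex.exp_add]
      push_cast
      ring_nf
    rw [key, norm_mul]
    have h1 : ‖Complex.exp (Complex.I * ((b : ℂ) * x))‖ = 1 := by
      rw [Complex.norm_exp]
      simp
    rw [h1, one_mul]
    calc ‖Complex.exp ((((a - b) * x : ℝ) : ℂ) * Complex.I) - 1‖
        ≤ |(a - b) * x| := abs_exp_I_sub_one_le _
      _ = |a - b| * |x| := abs_mul _ _
      _ ≤ |a - b| * Real.pi := by
          refine mul_le_mul_of_nonneg_left ?_ (abs_nonneg _)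
          rw [abs_le]; exact ⟨hx.1, hx.2⟩
      _ = Real.pi * |a - b| := mul_comm _ _
  calc (eLpNorm _ 2 μπ).toReal ≤ (μπ Set.univ ^ (2:ℝ≥0∞).toReal⁻¹ *
        ENNReal.ofReal (Real.pi * |a - b|)).toReal := by
        refine ENNReal.toReal_mono ?_ (eLpNorm_le_of_ae_bound hbound)
        simp [μπ_univ]
    _ = Real.pi * |a - b| := by
        rw [μπ_univ, ENNReal.one_rpow, one_mul, ENNReal.toReal_ofReal (by positivity)]

lemma integral_exp_I_int (n : ℤ) :
    ∫ x : ℝ, Complex.exp (Complex.I * ((n : ℝ) * (x : ℝ) : ℝ)) ∂μπ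
      = if n = 0 then 1 else 0 := by
  have hπ : (0:ℝ) < Real.pi := Real.pi_pos
  rw [μπ, integral_smul_nnreal_measure]
  have hIcc : ∫ x in Set.Icc (-Real.pi) Real.pi, Complex.exp (Complex.I * ((n : ℝ) * x : ℝ))
      = ∫ x in (-Real.pi)..Real.pi, Complex.exp (Complex.I * ((n : ℝ) * x : ℝ)) := by
    rw [intervalIntegral.integral_of_le (by linarith), integral_Icc_eq_integral_Ioc]
  rw [hIcc]
  rcases eq_or_ne n 0 with rfl | hn
  · simp only [if_pos rfl]
    rw [intervalIntegral.integral_congr (g := fun _ => (1:ℂ)) (fun x _ => by push_cast; simp),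
      intervalIntegral.integral_const, NNReal.smul_def, Real.coe_toNNReal _ (by positivity),
      show Real.pi - -Real.pi = 2 * Real.pi by ring, smul_smul,
      show (1 / (2 * Real.pi)) * (2 * Real.pi) = 1 by field_simp, one_smul]
    simp
  · rw [if_neg hn]
    have hcongr : ∀ x ∈ Set.uIcc (-Real.pi) Real.pi,
        Complex.exp (Complex.I * ((n : ℝ) * x : ℝ)) = Complex.exp ((Complex.I * n) * x) := by
      intro x _; push_cast; ring_nf
    rw [intervalIntegral.integral_congr hcongr,
      integral_exp_mul_complex (by simp [Complex.I_ne_zero, hn])]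
    have hzero : Complex.exp (Complex.I * n * (Real.pi : ℂ))
        - Complex.exp (Complex.I * n * ((-Real.pi : ℝ) : ℂ)) = 0 := by
      have key : Complex.I * n * (Real.pi : ℂ)
          = Complex.I * n * ((-Real.pi : ℝ) : ℂ) + n * (2 * (Real.pi : ℂ) * Complex.I) := by
        push_cast; ring
      rw [key, Complex.exp_add, Complex.exp_int_mul_two_pi_mul_I, mul_one, sub_self]
    rw [hzero, zero_div, smul_zero]

lemma orthonormal_fexp : Orthonormal ℂ (fun k : ℤ => fexp (k : ℝ)) := by
  rw [orthonormal_iff_ite]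
  intro j k
  have h1 := (memLp_fexp (j : ℝ)).coeFn_toLp
  have h2 := (memLp_fexp (k : ℝ)).coeFn_toLp
  have key : (inner ℂ (fexp (j : ℝ)) (fexp (k : ℝ)) : ℂ)
      = ∫ x : ℝ, Complex.exp (Complex.I * (((k - j : ℤ) : ℝ) * x : ℝ)) ∂μπ := by
    rw [MeasureTheory.L2.inner_def]
    refine integral_congr_ae ?_
    filter_upwards [h1, h2] with x e1 e2
    unfold fexp
    rw [e1, e2, RCLike.inner_apply, ← Complex.exp_conj, map_mul, Complex.conj_I, map_mul,
      Complex.conj_ofReal, Complex.conj_ofReal, ← Complex.exp_add]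
    congr 1
    push_cast
    ring
  rw [key, integral_exp_I_int]
  by_cases h : j = k <;> simp [h, sub_eq_zero, eq_comm]

lemma summable_mul_of_sq {ι : Type*} {a b : ι → ℝ} (ha : ∀ i, 0 ≤ a i) (hb : ∀ i, 0 ≤ b i)
    (ha2 : Summable fun i => a i ^ 2) (hb2 : Summable fun i => b i ^ 2) :
    Summable fun i => a i * b i := by
  refine Summable.of_nonneg_of_le (fun i => mul_nonneg (ha i) (hb i))
    (fun i => ?_) ((ha2.add hb2).div_const 2)
  nlinarith [sq_nonneg (a i - b i)]

lemma tsum_mul_le_sqrt_mul_sqrt {ι : Type*} {a b : ι → ℝ} (ha : ∀ i, 0 ≤ a i) (hb : ∀ i, 0 ≤ b i)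
    (ha2 : Summable fun i => a i ^ 2) (hb2 : Summable fun i => b i ^ 2) :
    ∑' i, a i * b i ≤ Real.sqrt (∑' i, a i ^ 2) * Real.sqrt (∑' i, b i ^ 2) := by
  refine Summable.tsum_le_of_sum_le (summable_mul_of_sq ha hb ha2 hb2) (fun s => ?_)
  have h1 : (∑ i ∈ s, a i * b i) ^ 2 ≤ (∑ i ∈ s, a i ^ 2) * ∑ i ∈ s, b i ^ 2 :=
    Finset.sum_mul_sq_le_sq_mul_sq s a b
  have h2 : (∑ i ∈ s, a i ^ 2) ≤ ∑' i, a i ^ 2 :=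
    Summable.sum_le_tsum s (fun i _ => sq_nonneg _) ha2
  have h3 : (∑ i ∈ s, b i ^ 2) ≤ ∑' i, b i ^ 2 :=
    Summable.sum_le_tsum s (fun i _ => sq_nonneg _) hb2
  have hs : 0 ≤ ∑ i ∈ s, a i * b i :=
    Finset.sum_nonneg fun i _ => mul_nonneg (ha i) (hb i)
  rw [← Real.sqrt_mul (tsum_nonneg fun i => sq_nonneg _)]
  rw [show (∑ i ∈ s, a i * b i) = Real.sqrt ((∑ i ∈ s, a i * b i) ^ 2) by
    rw [Real.sqrt_sq hs]]
  refine Real.sqrt_le_sqrt ?_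
  calc (∑ i ∈ s, a i * b i) ^ 2 ≤ (∑ i ∈ s, a i ^ 2) * ∑ i ∈ s, b i ^ 2 := h1
    _ ≤ (∑' i, a i ^ 2) * ∑' i, b i ^ 2 := by
        refine mul_le_mul h2 h3 (Finset.sum_nonneg fun i _ => sq_nonneg _)
          (tsum_nonneg fun i => sq_nonneg _)

lemma exists_perturbation_clm {ι H : Type*} [NormedAddCommGroup H] [InnerProductSpace ℂ H]
    [CompleteSpace H] {e : ι → H} (he : Orthonormal ℂ e) (d : ι → H)
    (hd : Summable fun i => ‖d i‖ ^ 2) :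
    ∃ U : H →L[ℂ] H, ∀ i, U (e i) = e i + d i := by
  classical
  have hnorm : ∀ f : H, Summable fun i => ‖(inner ℂ (e i) f : ℂ) • d i‖ := by
    intro f
    simp only [norm_smul]
    exact summable_mul_of_sq (fun i => norm_nonneg _) (fun i => norm_nonneg _)
      (he.inner_products_summable f) hd
  have hsum : ∀ f : H, Summable fun i => (inner ℂ (e i) f : ℂ) • d i :=
    fun f => (hnorm f).of_norm
  set K : H →ₗ[ℂ] H :=
    { toFun := fun f => ∑' i, (inner ℂ (e i) f : ℂ) • d i
      map_add' := by
        intro f g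
        simp only [inner_add_right, add_smul]
        exact Summable.tsum_add (hsum f) (hsum g)
      map_smul' := by
        intro c f
        simp only [inner_smul_right, mul_smul, RingHom.id_apply]
        exact Summable.tsum_const_smul c (hsum f) } with hK
  have hbound : ∀ f : H, ‖K f‖ ≤ Real.sqrt (∑' i, ‖d i‖ ^ 2) * ‖f‖ := by
    intro f
    calc ‖K f‖ ≤ ∑' i, ‖(inner ℂ (e i) f : ℂ) • d i‖ := norm_tsum_le_tsum_norm (hnorm f)
      _ = ∑' i, ‖(inner ℂ (e i) f : ℂ)‖ * ‖d i‖ := by simp only [norm_smul]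
      _ ≤ Real.sqrt (∑' i, ‖(inner ℂ (e i) f : ℂ)‖ ^ 2) * Real.sqrt (∑' i, ‖d i‖ ^ 2) :=
          tsum_mul_le_sqrt_mul_sqrt (fun i => norm_nonneg _) (fun i => norm_nonneg _)
            (he.inner_products_summable f) hd
      _ ≤ ‖f‖ * Real.sqrt (∑' i, ‖d i‖ ^ 2) := by
          refine mul_le_mul_of_nonneg_right ?_ (Real.sqrt_nonneg _)
          calc Real.sqrt (∑' i, ‖(inner ℂ (e i) f : ℂ)‖ ^ 2) ≤ Real.sqrt (‖f‖ ^ 2) :=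
              Real.sqrt_le_sqrt (he.tsum_inner_products_le f)
            _ = ‖f‖ := Real.sqrt_sq (norm_nonneg f)
      _ = Real.sqrt (∑' i, ‖d i‖ ^ 2) * ‖f‖ := mul_comm _ _
  refine ⟨ContinuousLinearMap.id ℂ H + K.mkContinuous _ hbound, fun i => ?_⟩
  have hinner : ∀ j, (inner ℂ (e j) (e i) : ℂ) = if j = i then 1 else 0 :=
    fun j => orthonormal_iff_ite.mp he j i
  have hKe : K (e i) = d i := by
    rw [hK]
    simp only [LinearMap.coe_mk, AddHom.coe_mk]
    rw [tsum_eq_single i]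
    · rw [hinner i, if_pos rfl, one_smul]
    · intro j hj
      rw [hinner j, if_neg hj, zero_smul]
  simp only [ContinuousLinearMap.add_apply, ContinuousLinearMap.coe_id', id_eq,
    LinearMap.mkContinuous_apply, hKe]

lemma norm_fexp_sub_sq_le (a b : ℝ) :
    ‖fexp a - fexp b‖ ^ 2 ≤ Real.pi ^ 2 * (a - b) ^ 2 := by
  have h := norm_fexp_sub_le a b
  have h2 : ‖fexp a - fexp b‖ ^ 2 ≤ (Real.pi * |a - b|) ^ 2 :=
    pow_le_pow_left₀ (norm_nonneg _) h 2
  calc ‖fexp a - fexp b‖ ^ 2 ≤ (Real.pi * |a - b|) ^ 2 := h2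
    _ = Real.pi ^ 2 * (a - b) ^ 2 := by rw [mul_pow, sq_abs]

lemma summable_fexp_sub_sq {u v : ℤ → ℝ} (h : Summable fun k : ℤ => (u k - v k) ^ 2) :
    Summable fun k : ℤ => ‖fexp (u k) - fexp (v k)‖ ^ 2 := by
  refine Summable.of_nonneg_of_le (fun k => sq_nonneg _)
    (fun k => norm_fexp_sub_sq_le (u k) (v k)) (h.mul_left (Real.pi ^ 2))

/-- For `t = (t_k)` with `(t_k − k) ∈ ℓ²`, the operator `U_t` on
`L²([-π,π]; dx/2π)` determined by `U_t e^{ikx} = e^{i t_k x}` exists, `U_t − I` is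
Hilbert–Schmidt (i.e. `∑_k ‖U_t e_k − e_k‖² < ∞` over the exponential orthonormal basis),
and `‖U_t − U_s‖_{HS} ≤ (2π/√3) ‖t − s‖_{ℓ²}`. -/
theorem stmt5 (t s : ℤ → ℝ)
    (ht : Summable fun k : ℤ => (t k - (k : ℝ)) ^ 2)
    (hs : Summable fun k : ℤ => (s k - (k : ℝ)) ^ 2) :
    (∃ U : Lp ℂ 2 μπ →L[ℂ] Lp ℂ 2 μπ,
      (∀ k : ℤ, U (fexp (k : ℝ)) = fexp (t k)) ∧
      Summable (fun k : ℤ => ‖fexp (t k) - fexp (k : ℝ)‖ ^ 2)) ∧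
    Real.sqrt (∑' k : ℤ, ‖fexp (t k) - fexp (s k)‖ ^ 2) ≤
      (2 * Real.pi / Real.sqrt 3) * Real.sqrt (∑' k : ℤ, (t k - s k) ^ 2) := by
  have hπ : (0:ℝ) < Real.pi := Real.pi_pos
  have hd : Summable fun k : ℤ => ‖fexp (t k) - fexp (k : ℝ)‖ ^ 2 :=
    summable_fexp_sub_sq (by simpa using ht)
  constructor
  · obtain ⟨U, hU⟩ := exists_perturbation_clm orthonormal_fexp
      (fun k : ℤ => fexp (t k) - fexp (k : ℝ)) hd
    refine ⟨U, fun k => ?_, hd⟩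
    rw [hU k]
    abel
  · -- the HS estimate
    have hts : Summable fun k : ℤ => (t k - s k) ^ 2 := by
      refine Summable.of_nonneg_of_le (fun k => sq_nonneg _) (fun k => ?_)
        ((ht.mul_left 2).add (hs.mul_left 2))
      nlinarith [sq_nonneg ((t k - k) + (s k - k))]
    have hsum2 : Summable fun k : ℤ => ‖fexp (t k) - fexp (s k)‖ ^ 2 :=
      summable_fexp_sub_sq hts
    have h1 : (∑' k : ℤ, ‖fexp (t k) - fexp (s k)‖ ^ 2)
        ≤ Real.pi ^ 2 * ∑' k : ℤ, (t k - s k) ^ 2 := by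
      rw [← tsum_mul_left]
      exact Summable.tsum_le_tsum (fun k => norm_fexp_sub_sq_le (t k) (s k)) hsum2
        (hts.mul_left _)
    have h2 : Real.sqrt (∑' k : ℤ, ‖fexp (t k) - fexp (s k)‖ ^ 2)
        ≤ Real.pi * Real.sqrt (∑' k : ℤ, (t k - s k) ^ 2) := by
      calc Real.sqrt (∑' k : ℤ, ‖fexp (t k) - fexp (s k)‖ ^ 2)
          ≤ Real.sqrt (Real.pi ^ 2 * ∑' k : ℤ, (t k - s k) ^ 2) := Real.sqrt_le_sqrt h1
        _ = Real.pi * Real.sqrt (∑' k : ℤ, (t k - s k) ^ 2) := by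
            rw [Real.sqrt_mul (sq_nonneg _), Real.sqrt_sq hπ.le]
    refine h2.trans ?_
    refine mul_le_mul_of_nonneg_right ?_ (Real.sqrt_nonneg _)
    have h3 : Real.sqrt 3 ≤ 2 := by
      nlinarith [Real.sq_sqrt (by norm_num : (3:ℝ) ≥ 0), Real.sqrt_nonneg 3]
    have h4 : (0:ℝ) < Real.sqrt 3 := Real.sqrt_pos.mpr (by norm_num)
    rw [le_div_iff₀ h4]
    nlinarith
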